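/- arXiv:1809.03744 — 9 statements merged into one kernel-verified Lean document; each statement's English description precedes it below -/
import Mathlib

section
/- For all x, y ∈ ℚ^V one has χ(x ∨ y) + χ(x ∧ y) ≤ χ(x) + χ(y). -/
lemma bilin_nonneg_of_disjoint
    {V : Type*} [Fintype V] [DecidableEq V]
    (B : LinearMap.BilinForm ℚ (V → ℚ))
    (hoff : ∀ v w : V, v ≠ w → 0 ≤ B (Pi.single v 1) (Pi.single w 1))
    (p q : V → ℚ) (hp : ∀ v, 0 ≤ p v) (hq : ∀ v, 0 ≤ q v)
    (hpq : ∀ v, p v * q v = 0) : 0 ≤ B p q := by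
  have hpe : p = ∑ v : V, p v • (Pi.single v 1 : V → ℚ) := by
    funext j
    simp [Finset.sum_apply, Pi.single_apply, Finset.sum_ite_eq]
  have hqe : q = ∑ v : V, q v • (Pi.single v 1 : V → ℚ) := by
    funext j
    simp [Finset.sum_apply, Pi.single_apply, Finset.sum_ite_eq]
  rw [hpe, hqe]
  simp only [map_sum, map_smul, LinearMap.sum_apply, LinearMap.smul_apply,
    smul_eq_mul]
  apply Finset.sum_nonneg
  intro w _
  rw [Finset.mul_sum]
  apply Finset.sum_nonneg
  intro v _
  by_cases h : v = w
  · subst h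
    have h2 : q v * (p v * B ((Pi.single v 1 : V → ℚ)) (Pi.single v 1)) =
        (p v * q v) * B ((Pi.single v 1 : V → ℚ)) (Pi.single v 1) := by ring
    rw [h2, hpq v, zero_mul]
  · exact mul_nonneg (hq w) (mul_nonneg (hp v) (hoff v w h))

/-- submodularity: for all `x, y ∈ ℚ^V`,
`χ(x ∨ y) + χ(x ∧ y) ≤ χ(x) + χ(y)`. -/
theorem chi_submodular
    {V : Type*} [Fintype V] [Nonempty V] [DecidableEq V]
    (B : LinearMap.BilinForm ℚ (V → ℚ))
    (hsymm : ∀ x y : V → ℚ, B x y = B y x)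
    (hoff : ∀ v w : V, v ≠ w → 0 ≤ B (Pi.single v 1) (Pi.single w 1))
    (ZK : V → ℚ)
    (hZK : ∀ v : V, B ZK (Pi.single v 1) = B (Pi.single v 1) (Pi.single v 1) + 2)
    (χ : (V → ℚ) → ℚ)
    (hχ : ∀ x : V → ℚ, χ x = -(B x (x - ZK)) / 2) :
    ∀ x y : V → ℚ, χ (x ⊔ y) + χ (x ⊓ y) ≤ χ x + χ y := by
  intro x y
  set p : V → ℚ := fun v => max (y v - x v) 0 with hpdef
  set q : V → ℚ := fun v => max (x v - y v) 0 with hqdef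
  have hsup : x ⊔ y = x + p := by
    funext v
    simp only [Pi.sup_apply, Pi.add_apply, hpdef]
    rcases le_total (x v) (y v) with h | h
    · rw [max_eq_right h, max_eq_left (by linarith)]; ring
    · rw [max_eq_left h, max_eq_right (by linarith)]; ring
  have hinf : x ⊓ y = y - p := by
    funext v
    simp only [Pi.inf_apply, Pi.sub_apply, hpdef]
    rcases le_total (x v) (y v) with h | h
    · rw [min_eq_left h, max_eq_left (by linarith)]; ring
    · rw [min_eq_right h, max_eq_right (by linarith)]; ring
  have hq : q = p + x - y := by
    funext v
    simp only [hpdef, hqdef, Pi.sub_apply, Pi.add_apply]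
    rcases le_total (x v) (y v) with h | h
    · rw [max_eq_right (by linarith), max_eq_left (by linarith)]; ring
    · rw [max_eq_left (by linarith), max_eq_right (by linarith)]; ring
  have hkey : 0 ≤ B q p := by
    apply bilin_nonneg_of_disjoint B hoff
    · intro v; exact le_max_right _ _
    · intro v; exact le_max_right _ _
    · intro v
      simp only [hpdef, hqdef]
      rcases le_total (x v) (y v) with h | h
      · rw [max_eq_right (by linarith)]; ring
      · rw [max_eq_right (by linarith) (a := y v - x v)]; ring
  have heq : χ x + χ y - (χ (x ⊔ y) + χ (x ⊓ y)) = B q p := by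
    rw [hsup, hinf, hq, hχ, hχ, hχ, hχ]
    simp only [map_add, map_sub, LinearMap.add_apply, LinearMap.sub_apply]
    have h1 := hsymm x p
    have h2 := hsymm y p
    have h3 := hsymm ZK p
    linarith [hsymm x p, hsymm y p]
  linarith
end

section
/- Let μ = min_{l ∈ ℤ^V} χ(l) (this minimum exists). If x, y ∈ ℤ^V satisfy χ(x) = χ(y) = μ, then χ(x ∨ y) = μ and χ(x ∧ y) = μ; that is, the set of minimizers of χ on ℤ^V is closed under coordinatewise maximum and minimum. -/
/-- Cast an integer-valued lattice point into the rational vector space `V → ℚ`. -/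
def toQ {V : Type*} (l : V → ℤ) : V → ℚ := fun v => (l v : ℚ)

section Aux

variable {V : Type*} [Fintype V] [DecidableEq V]

lemma pi_rep (p : V → ℚ) : p = ∑ v, p v • (Pi.single v 1 : V → ℚ) := by
  funext w
  simp [Finset.sum_apply, Pi.single_apply]

lemma bilin_expand (B : LinearMap.BilinForm ℚ (V → ℚ)) (p q : V → ℚ) :
    B p q = ∑ v, ∑ w, p v * q w * B (Pi.single v 1) (Pi.single w 1) := by
  conv_lhs => rw [pi_rep p, pi_rep q]
  simp only [map_sum, map_smul, LinearMap.sum_apply, LinearMap.smul_apply, smul_eq_mul]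
  rw [Finset.sum_comm]
  refine Finset.sum_congr rfl fun v _ => ?_
  rw [Finset.mul_sum]
  exact Finset.sum_congr rfl fun w _ => by ring

lemma bilin_expand_left (B : LinearMap.BilinForm ℚ (V → ℚ)) (p q : V → ℚ) :
    B p q = ∑ v, p v * B (Pi.single v 1) q := by
  conv_lhs => rw [pi_rep p]
  rw [map_sum, LinearMap.sum_apply]
  refine Finset.sum_congr rfl fun v _ => ?_
  rw [LinearMap.map_smul, LinearMap.smul_apply, smul_eq_mul]

lemma den_mul_int (q : ℚ) (n : ℕ) (h : q.den ∣ n) : ((n:ℚ) * q) ∈ (⊥ : Subring ℚ) := by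
  obtain ⟨k, rfl⟩ := h
  have hd : (q.den : ℚ) ≠ 0 := Nat.cast_ne_zero.mpr q.den_nz
  have hnum := Rat.num_div_den q
  rw [div_eq_iff hd] at hnum
  have : ((q.den * k : ℕ) : ℚ) * q = (q.num * k : ℤ) := by
    push_cast
    rw [hnum]
    ring
  rw [this, Subring.mem_bot]
  exact ⟨q.num * k, rfl⟩

end Aux

/-- Let `μ = min_{l ∈ ℤ^V} χ(l)` (this minimum exists).  If
`x, y ∈ ℤ^V` satisfy `χ(x) = χ(y) = μ`, then `χ(x ∨ y) = μ` and `χ(x ∧ y) = μ`: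
the set of minimizers of `χ` on `ℤ^V` is closed under coordinatewise max and min. -/
theorem chi_minimizers_lattice_closed
    {V : Type*} [Fintype V] [Nonempty V] [DecidableEq V]
    (B : LinearMap.BilinForm ℚ (V → ℚ))
    (hsymm : ∀ x y : V → ℚ, B x y = B y x)
    (hoff : ∀ v w : V, v ≠ w → 0 ≤ B (Pi.single v 1) (Pi.single w 1))
    (hneg : ∀ x : V → ℚ, x ≠ 0 → B x x < 0)
    (ZK : V → ℚ)
    (hZK : ∀ v : V, B ZK (Pi.single v 1) = B (Pi.single v 1) (Pi.single v 1) + 2)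
    (χ : (V → ℚ) → ℚ)
    (hχ : ∀ x : V → ℚ, χ x = -(B x (x - ZK)) / 2) :
    ∃ μ : ℚ, (∃ l : V → ℤ, χ (toQ l) = μ) ∧ (∀ l : V → ℤ, μ ≤ χ (toQ l)) ∧
      (∀ x y : V → ℤ, χ (toQ x) = μ → χ (toQ y) = μ →
        χ (toQ (x ⊔ y)) = μ ∧ χ (toQ (x ⊓ y)) = μ) := by
  have hchi : ∀ x : V → ℚ, χ x = (B x ZK - B x x) / 2 := by
    intro x
    rw [hχ x, map_sub]
    ring
  have hnonpos : ∀ w : V → ℚ, B w w ≤ 0 := by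
    intro w
    by_cases h : w = 0
    · simp [h]
    · exact (hneg w h).le
  set c : ℚ := B ZK ZK / 8 with hc
  have hlb : ∀ x : V → ℚ, c ≤ χ x := by
    intro x
    have key : B (x - (1/2 : ℚ) • ZK) (x - (1/2:ℚ) • ZK)
        = B x x - B x ZK + (1/4) * B ZK ZK := by
      simp only [map_sub, map_smul, LinearMap.sub_apply, LinearMap.smul_apply, smul_eq_mul]
      rw [hsymm ZK x]
      ring
    have := hnonpos (x - (1/2:ℚ) • ZK)
    rw [key] at this
    rw [hchi x, hc]
    linarith
  set D : ℕ := (∏ p : V × V, (B (Pi.single p.1 1) (Pi.single p.2 1)).den) *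
      (∏ v : V, (B (Pi.single v 1) ZK).den) with hD
  have hDpos : 0 < D := by
    apply Nat.mul_pos <;> exact Finset.prod_pos (fun _ _ => (Rat.den_pos _))
  have hDdvd1 : ∀ v w : V, (B (Pi.single v 1) (Pi.single w 1)).den ∣ D := by
    intro v w
    exact Dvd.dvd.mul_right (Finset.dvd_prod_of_mem _ (Finset.mem_univ (v, w))) _
  have hDdvd2 : ∀ v : V, (B (Pi.single v 1) ZK).den ∣ D := by
    intro v
    exact Dvd.dvd.mul_left (Finset.dvd_prod_of_mem _ (Finset.mem_univ v)) _
  have hint : ∀ l : V → ℤ, ∃ m : ℤ, (m : ℚ) = 2 * D * χ (toQ l) := by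
    intro l
    have key : 2 * (D:ℚ) * χ (toQ l) ∈ (⊥ : Subring ℚ) := by
      rw [hchi]
      rw [bilin_expand_left B (toQ l) ZK, bilin_expand B (toQ l) (toQ l)]
      have heq : ∀ S1 S2 : ℚ, 2 * (D:ℚ) * ((S1 - S2) / 2) = (D:ℚ) * S1 - (D:ℚ) * S2 :=
        fun _ _ => by ring
      rw [heq]
      apply sub_mem
      · rw [Finset.mul_sum]
        apply Subring.sum_mem
        intro v _
        have : (D:ℚ) * (toQ l v * B (Pi.single v 1) ZK)
            = (l v : ℚ) * ((D:ℚ) * B (Pi.single v 1) ZK) := by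
          simp only [toQ]; ring
        rw [this]
        exact Subring.mul_mem _ (by rw [Subring.mem_bot]; exact ⟨l v, rfl⟩)
          (den_mul_int _ _ (hDdvd2 v))
      · rw [Finset.mul_sum]
        apply Subring.sum_mem
        intro v _
        rw [Finset.mul_sum]
        apply Subring.sum_mem
        intro w _
        have : (D:ℚ) * (toQ l v * toQ l w * B (Pi.single v 1) (Pi.single w 1))
            = (l v : ℚ) * ((l w : ℚ) * ((D:ℚ) * B (Pi.single v 1) (Pi.single w 1))) := by
          simp only [toQ]; ring
        rw [this]
        exact Subring.mul_mem _ (by rw [Subring.mem_bot]; exact ⟨l v, rfl⟩)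
          (Subring.mul_mem _ (by rw [Subring.mem_bot]; exact ⟨l w, rfl⟩)
            (den_mul_int _ _ (hDdvd1 v w)))
    rw [Subring.mem_bot] at key
    obtain ⟨m, hm⟩ := key
    exact ⟨m, hm⟩
  have hbdd : ∃ b : ℤ, ∀ z : ℤ, (∃ l : V → ℤ, (z : ℚ) = 2 * D * χ (toQ l)) → b ≤ z := by
    refine ⟨⌈2 * (D:ℚ) * c⌉, fun z ⟨l, hl⟩ => ?_⟩
    rw [Int.ceil_le, hl]
    have h2D : (0:ℚ) ≤ 2 * (D:ℚ) := by positivity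
    exact mul_le_mul_of_nonneg_left (hlb (toQ l)) h2D
  have hinh : ∃ z : ℤ, ∃ l : V → ℤ, (z : ℚ) = 2 * D * χ (toQ l) := by
    obtain ⟨m, hm⟩ := hint (fun _ => 0)
    exact ⟨m, fun _ => 0, hm⟩
  obtain ⟨n₀, ⟨l₀, hl₀⟩, hmin⟩ := Int.exists_least_of_bdd hbdd hinh
  have hmin' : ∀ l : V → ℤ, χ (toQ l₀) ≤ χ (toQ l) := by
    intro l
    obtain ⟨m, hm⟩ := hint l
    have hn : n₀ ≤ m := hmin m ⟨l, hm⟩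
    have h2D : (0:ℚ) < 2 * (D:ℚ) := by positivity
    have hcast : (n₀ : ℚ) ≤ (m : ℚ) := by exact_mod_cast hn
    rw [hl₀, hm] at hcast
    exact le_of_mul_le_mul_left hcast h2D
  refine ⟨χ (toQ l₀), ⟨l₀, rfl⟩, hmin', ?_⟩
  intro x y hx hy
  set μ := χ (toQ l₀) with hμ
  set a : V → ℤ := (x ⊔ y) - x with ha
  set ta : V → ℚ := toQ a with hta
  set tb : V → ℚ := ta + toQ x - toQ y with htb
  have hu : toQ (x ⊔ y) = toQ x + ta := by
    funext v
    simp only [hta, ha, toQ, Pi.add_apply, Pi.sub_apply, Pi.sup_apply]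
    push_cast
    ring
  have hw : toQ (x ⊓ y) = toQ y - ta := by
    funext v
    simp only [hta, ha, toQ, Pi.sub_apply, Pi.inf_apply, Pi.sup_apply]
    rcases le_total (x v) (y v) with h | h
    · rw [inf_eq_left.mpr h, sup_eq_right.mpr h]; push_cast; ring
    · rw [inf_eq_right.mpr h, sup_eq_left.mpr h]; push_cast; ring
  have hab : ∀ v : V, ta v * tb v = 0 := by
    intro v
    simp only [hta, htb, ha, toQ, Pi.add_apply, Pi.sub_apply, Pi.sup_apply]
    rcases le_total (x v) (y v) with h | h
    · rw [sup_eq_right.mpr h]; push_cast; ring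
    · rw [sup_eq_left.mpr h]; push_cast; ring
  have hanneg : ∀ v : V, 0 ≤ ta v := by
    intro v
    simp only [hta, ha, toQ, Pi.sub_apply, Pi.sup_apply]
    have : x v ≤ x v ⊔ y v := le_sup_left
    exact_mod_cast sub_nonneg.mpr this
  have hbnneg : ∀ v : V, 0 ≤ tb v := by
    intro v
    simp only [hta, htb, ha, toQ, Pi.add_apply, Pi.sub_apply, Pi.sup_apply]
    rcases le_total (x v) (y v) with h | h
    · rw [sup_eq_right.mpr h]
      push_cast
      have : ((x v : ℤ) : ℚ) ≤ ((y v : ℤ) : ℚ) := by exact_mod_cast h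
      linarith
    · rw [sup_eq_left.mpr h]
      push_cast
      have : ((y v : ℤ) : ℚ) ≤ ((x v : ℤ) : ℚ) := by exact_mod_cast h
      linarith
  have hBab : 0 ≤ B ta tb := by
    rw [bilin_expand B ta tb]
    apply Finset.sum_nonneg
    intro v _
    apply Finset.sum_nonneg
    intro w _
    by_cases hvw : v = w
    · subst hvw
      rw [hab v, zero_mul]
    · exact mul_nonneg (mul_nonneg (hanneg v) (hbnneg w)) (hoff v w hvw)
  have hkey : χ (toQ (x ⊔ y)) + χ (toQ (x ⊓ y)) = χ (toQ x) + χ (toQ y) - B ta tb := by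
    rw [hchi, hchi, hchi, hchi, hu, hw]
    have e1 : B (toQ x + ta) ZK = B (toQ x) ZK + B ta ZK := by
      simp only [map_add, LinearMap.add_apply]
    have e2 : B (toQ y - ta) ZK = B (toQ y) ZK - B ta ZK := by
      simp only [map_sub, LinearMap.sub_apply]
    have e3 : B (toQ x + ta) (toQ x + ta)
        = B (toQ x) (toQ x) + 2 * B ta (toQ x) + B ta ta := by
      simp only [map_add, LinearMap.add_apply]
      rw [hsymm (toQ x) ta]
      ring
    have e4 : B (toQ y - ta) (toQ y - ta)
        = B (toQ y) (toQ y) - 2 * B ta (toQ y) + B ta ta := by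
      simp only [map_sub, LinearMap.sub_apply]
      rw [hsymm (toQ y) ta]
      ring
    have e5 : B ta tb = B ta ta + B ta (toQ x) - B ta (toQ y) := by
      rw [htb]
      simp only [map_sub, map_add]
    rw [e1, e2, e3, e4, e5]
    ring
  have h1 : μ ≤ χ (toQ (x ⊔ y)) := hmin' (x ⊔ y)
  have h2 : μ ≤ χ (toQ (x ⊓ y)) := hmin' (x ⊓ y)
  have hsum : χ (toQ (x ⊔ y)) + χ (toQ (x ⊓ y)) ≤ 2 * μ := by
    rw [hkey, hx, hy]
    linarith
  constructor <;> linarith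
end

section
/- Assume there exists Z ∈ ℤ^V with Z > 0 and χ(Z) = μ, where μ = min_{l ∈ ℤ^V} χ(l) (the non-rational case). Then the set M = {Z ∈ ℤ^V : Z > 0 and χ(Z) = μ} has a greatest element: there exists Z_max ∈ M such that Z ≤ Z_max for every Z ∈ M. -/
/-- Assume there exists `Z ∈ ℤ^V` with `Z > 0` and `χ(Z) = μ`, where
`μ = min_{l ∈ ℤ^V} χ(l)` (the non-rational case).  Then the set
`M = {Z ∈ ℤ^V : Z > 0, χ(Z) = μ}` has a greatest element. -/
theorem chi_minimizers_greatest_element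
    {V : Type*} [Fintype V] [Nonempty V] [DecidableEq V]
    (B : LinearMap.BilinForm ℚ (V → ℚ))
    (hsymm : ∀ x y : V → ℚ, B x y = B y x)
    (hoff : ∀ v w : V, v ≠ w → 0 ≤ B (Pi.single v 1) (Pi.single w 1))
    (hneg : ∀ x : V → ℚ, x ≠ 0 → B x x < 0)
    (ZK : V → ℚ)
    (hZK : ∀ v : V, B ZK (Pi.single v 1) = B (Pi.single v 1) (Pi.single v 1) + 2)
    (χ : (V → ℚ) → ℚ)
    (hχ : ∀ x : V → ℚ, χ x = -(B x (x - ZK)) / 2)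
    (μ : ℚ)
    (hμ : IsLeast {c : ℚ | ∃ l : V → ℤ, χ (toQ l) = c} μ)
    (hex : ∃ Z : V → ℤ, 0 ≤ Z ∧ Z ≠ 0 ∧ χ (toQ Z) = μ) :
    ∃ Zmax : V → ℤ, (0 ≤ Zmax ∧ Zmax ≠ 0 ∧ χ (toQ Zmax) = μ) ∧
      ∀ Z : V → ℤ, (0 ≤ Z ∧ Z ≠ 0 ∧ χ (toQ Z) = μ) → Z ≤ Zmax := by
  classical
  -- μ is a lower bound
  have hlb : ∀ l : V → ℤ, μ ≤ χ (toQ l) := fun l => hμ.2 ⟨l, rfl⟩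
  -- representation of a vector as a sum of singles
  have hrep : ∀ u : V → ℚ, u = ∑ v, u v • (Pi.single v (1:ℚ) : V → ℚ) := by
    intro u; funext w
    rw [Finset.sum_apply]
    simp [Pi.single_apply]
  -- expansion of B
  have hexpand : ∀ u w : V → ℚ,
      B u w = ∑ v, ∑ v', u v * w v' * B (Pi.single v 1) (Pi.single v' 1) := by
    intro u w
    conv_lhs => rw [hrep u, hrep w]
    simp only [map_sum, map_smul, LinearMap.sum_apply, LinearMap.smul_apply, smul_eq_mul]
    rw [Finset.sum_comm]
    refine Finset.sum_congr rfl fun v _ => ?_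
    rw [Finset.mul_sum]
    exact Finset.sum_congr rfl fun v' _ => by ring
  -- closure of the minimizing set under sup
  have key : ∀ X Y : V → ℤ, χ (toQ X) = μ → χ (toQ Y) = μ → χ (toQ (X ⊔ Y)) = μ := by
    intro X Y hX hY
    have hQnn : ∀ v, (0:ℚ) ≤ toQ (Y - X ⊓ Y) v := by
      intro v
      have h0 : (0:ℤ) ≤ (Y - X ⊓ Y) v := by
        simp only [Pi.sub_apply, Pi.inf_apply]; omega
      show (0:ℚ) ≤ (((Y - X ⊓ Y) v : ℤ) : ℚ)
      exact_mod_cast h0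
    have hb : toQ (X ⊔ Y) = toQ X + toQ (Y - X ⊓ Y) := by
      funext v
      show (((X ⊔ Y) v : ℤ) : ℚ) = ((X v : ℤ) : ℚ) + (((Y - X ⊓ Y) v : ℤ) : ℚ)
      have h1 : (X ⊔ Y) v = X v + (Y - X ⊓ Y) v := by
        simp only [Pi.sup_apply, Pi.inf_apply, Pi.sub_apply]; omega
      rw [h1, Int.cast_add]
    have ha : toQ (X ⊓ Y) = toQ Y - toQ (Y - X ⊓ Y) := by
      funext v
      show (((X ⊓ Y) v : ℤ) : ℚ) = ((Y v : ℤ) : ℚ) - (((Y - X ⊓ Y) v : ℤ) : ℚ)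
      have h1 : (X ⊓ Y) v = Y v - (Y - X ⊓ Y) v := by
        simp only [Pi.inf_apply, Pi.sub_apply]; omega
      rw [h1, Int.cast_sub]
    have hfac : ∀ v, (toQ X - toQ Y + toQ (Y - X ⊓ Y)) v
        = ((X v - Y v + (Y - X ⊓ Y) v : ℤ) : ℚ) := by
      intro v
      show ((X v : ℤ) : ℚ) - ((Y v : ℤ) : ℚ) + (((Y - X ⊓ Y) v : ℤ) : ℚ)
        = ((X v - Y v + (Y - X ⊓ Y) v : ℤ) : ℚ)
      push_cast; ring
    -- nonnegativity of B (x - y + Q) Q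
    have hPQ : 0 ≤ B (toQ X - toQ Y + toQ (Y - X ⊓ Y)) (toQ (Y - X ⊓ Y)) := by
      rw [hexpand]
      refine Finset.sum_nonneg fun v _ => Finset.sum_nonneg fun w _ => ?_
      by_cases hvw : v = w
      · subst hvw
        rcases le_total (X v) (Y v) with h | h
        · have hz0 : X v - Y v + (Y - X ⊓ Y) v = 0 := by
            simp only [Pi.sub_apply, Pi.inf_apply]; omega
          rw [hfac v, hz0]
          simp
        · have hz0 : (Y - X ⊓ Y) v = 0 := by
            simp only [Pi.sub_apply, Pi.inf_apply]; omega
          have : toQ (Y - X ⊓ Y) v = 0 := by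
            show (((Y - X ⊓ Y) v : ℤ) : ℚ) = 0
            rw [hz0]; norm_num
          rw [this]
          simp
      · have h1 : 0 ≤ (toQ X - toQ Y + toQ (Y - X ⊓ Y)) v := by
          have h0 : (0:ℤ) ≤ X v - Y v + (Y - X ⊓ Y) v := by
            simp only [Pi.sub_apply, Pi.inf_apply]; omega
          rw [hfac v]
          exact_mod_cast h0
        exact mul_nonneg (mul_nonneg h1 (hQnn w)) (hoff v w hvw)
    -- the key identity
    have hid : χ (toQ (X ⊓ Y)) + χ (toQ (X ⊔ Y))
        = χ (toQ X) + χ (toQ Y) - B (toQ X - toQ Y + toQ (Y - X ⊓ Y)) (toQ (Y - X ⊓ Y)) := by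
      rw [ha, hb, hχ, hχ, hχ, hχ]
      simp only [map_add, map_sub, LinearMap.add_apply, LinearMap.sub_apply]
      linarith [hsymm (toQ X) (toQ Y), hsymm (toQ X) (toQ (Y - X ⊓ Y)),
        hsymm (toQ Y) (toQ (Y - X ⊓ Y)), hsymm (toQ (Y - X ⊓ Y)) (toQ X),
        hsymm (toQ (Y - X ⊓ Y)) (toQ Y)]
    have h1 := hlb (X ⊓ Y)
    have h2 := hlb (X ⊔ Y)
    linarith [hid, hPQ, hX, hY]
  -- full closure of M under sup
  have keyM : ∀ X ∈ {Z : V → ℤ | 0 ≤ Z ∧ Z ≠ 0 ∧ χ (toQ Z) = μ},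
      ∀ Y ∈ {Z : V → ℤ | 0 ≤ Z ∧ Z ≠ 0 ∧ χ (toQ Z) = μ},
      X ⊔ Y ∈ {Z : V → ℤ | 0 ≤ Z ∧ Z ≠ 0 ∧ χ (toQ Z) = μ} := by
    intro X hX Y hY
    refine ⟨le_trans hX.1 le_sup_left, ?_, key X Y hX.2.2 hY.2.2⟩
    intro h0
    exact hX.2.1 (le_antisymm (le_trans le_sup_left h0.le) hX.1)
  -- cast lemmas
  have haddQ : ∀ (L : V → ℤ) (v : V), toQ (L + Pi.single v 1) = toQ L + Pi.single v 1 := by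
    intro L v; funext w
    simp only [toQ, Pi.add_apply, Pi.single_apply]
    push_cast
    split_ifs <;> simp
  have hsubQ : ∀ (L : V → ℤ) (v : V), toQ (L - Pi.single v 1) = toQ L - Pi.single v 1 := by
    intro L v; funext w
    simp only [toQ, Pi.sub_apply, Pi.single_apply]
    push_cast
    split_ifs <;> simp
  -- bound on B z e_v for minimizers
  have hbnd : ∀ (Z : V → ℤ) (v : V), χ (toQ Z) = μ →
      |B (toQ Z) (Pi.single v 1)| ≤ 1 - B (Pi.single v 1) (Pi.single v 1) := by
    intro Z v hZ
    have h1 : μ ≤ χ (toQ Z + Pi.single v 1) := by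
      have := hlb (Z + Pi.single v 1)
      rwa [haddQ] at this
    have h2 : μ ≤ χ (toQ Z - Pi.single v 1) := by
      have := hlb (Z - Pi.single v 1)
      rwa [hsubQ] at this
    rw [hχ] at h1 h2
    rw [hχ] at hZ
    have hZKe : B (Pi.single v 1) ZK = B (Pi.single v 1) (Pi.single v 1) + 2 := by
      rw [hsymm (Pi.single v 1) ZK]; exact hZK v
    have hee : B (Pi.single v 1) (Pi.single v 1) < 0 := by
      refine hneg (Pi.single v 1) ?_
      intro h0
      have : (Pi.single v (1:ℚ) : V → ℚ) v = 0 := congrFun h0 v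
      simp at this
    simp only [map_add, map_sub, LinearMap.add_apply, LinearMap.sub_apply] at h1 h2 hZ
    rw [abs_le]
    constructor <;>
      linarith [hsymm (toQ Z) (Pi.single v 1), hsymm (Pi.single v 1) (toQ Z), hZKe, hee]
  -- the linear map z ↦ (B z e_v)_v
  set T : (V → ℚ) →ₗ[ℚ] (V → ℚ) := LinearMap.pi (fun v => B.flip (Pi.single v 1)) with hT
  have hTapp : ∀ (z : V → ℚ) (v : V), T z v = B z (Pi.single v 1) := by
    intro z v; simp [hT, LinearMap.pi_apply]
  have hTinj : Function.Injective T := by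
    rw [injective_iff_map_eq_zero]
    intro z hz
    by_contra h0
    have hzz : B z z = 0 := by
      nth_rewrite 2 [hrep z]
      rw [map_sum]
      refine Finset.sum_eq_zero fun v _ => ?_
      have hv : B z (Pi.single v 1) = 0 := by
        rw [← hTapp z v, hz]; rfl
      rw [map_smul, smul_eq_mul, hv, mul_zero]
    exact absurd hzz (ne_of_lt (hneg z h0))
  have hTsurj : Function.Surjective T := LinearMap.injective_iff_surjective.mp hTinj
  set E : (V → ℚ) ≃ₗ[ℚ] (V → ℚ) := LinearEquiv.ofBijective T ⟨hTinj, hTsurj⟩ with hE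
  have hEsymm : ∀ z : V → ℚ, E.symm (T z) = z := by
    intro z
    have h : E z = T z := rfl
    rw [← h, LinearEquiv.symm_apply_apply]
  -- coordinate bound for minimizers
  set C : V → ℚ := fun v => 1 - B (Pi.single v 1) (Pi.single v 1) with hC
  set N : V → ℚ := fun v => ∑ w, C w * |E.symm (Pi.single w 1) v| with hN
  have hcoord : ∀ (Z : V → ℤ) (v : V), χ (toQ Z) = μ → |toQ Z v| ≤ N v := by
    intro Z v hZ
    have hzv : toQ Z v = ∑ w, T (toQ Z) w * E.symm (Pi.single w 1) v := by
      conv_lhs => rw [← hEsymm (toQ Z), hrep (T (toQ Z))]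
      rw [map_sum, Finset.sum_apply]
      refine Finset.sum_congr rfl fun w _ => ?_
      rw [map_smul]
      simp [smul_eq_mul]
    rw [hzv]
    refine le_trans (Finset.abs_sum_le_sum_abs _ _) ?_
    refine Finset.sum_le_sum fun w _ => ?_
    rw [abs_mul]
    refine mul_le_mul_of_nonneg_right ?_ (abs_nonneg _)
    rw [hTapp]
    exact hbnd Z w hZ
  -- integer upper bound
  set n : V → ℤ := fun v => ⌈N v⌉ with hn
  have hub : ∀ Z : V → ℤ, 0 ≤ Z → χ (toQ Z) = μ → ∀ v, Z v ≤ n v := by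
    intro Z hZ0 hZ v
    have h1 : (Z v : ℚ) ≤ N v := le_trans (le_abs_self _) (hcoord Z v hZ)
    have h3 : (Z v : ℚ) ≤ (n v : ℚ) := le_trans h1 (Int.le_ceil _)
    exact_mod_cast h3
  -- finiteness of M
  have hMfin : {Z : V → ℤ | 0 ≤ Z ∧ Z ≠ 0 ∧ χ (toQ Z) = μ}.Finite := by
    refine Set.Finite.subset (Set.Finite.pi (fun v => Set.finite_Icc (0:ℤ) (n v))) ?_
    intro Z hZ
    rw [Set.mem_pi]
    intro v _
    exact ⟨hZ.1 v, hub Z hZ.1 hZ.2.2 v⟩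
  obtain ⟨Z0, hZ0⟩ := hex
  have hne : hMfin.toFinset.Nonempty := ⟨Z0, by rw [Set.Finite.mem_toFinset]; exact hZ0⟩
  refine ⟨hMfin.toFinset.sup' hne id, ?_, ?_⟩
  · exact Finset.sup'_mem _ keyM _ hne id
      (fun Z hZ => by rwa [Set.Finite.mem_toFinset] at hZ)
  · intro Z hZ
    exact Finset.le_sup' id (by rw [Set.Finite.mem_toFinset]; exact hZ)
end

section
/- If μ := min_{l ∈ ℤ^V} χ(l) < 0, then the set M = {Z ∈ ℤ^V : Z > 0 and χ(Z) = μ} is nonempty and has a least element: there exists Z_min ∈ M such that Z_min ≤ Z for every Z ∈ M. -/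
set_option linter.unusedSectionVars false

section Aux
variable {V : Type*} [Fintype V] [DecidableEq V]

lemma toQ_add (a b : V → ℤ) : toQ (a + b) = toQ a + toQ b := by
  funext v; simp [toQ]
lemma toQ_nonneg {a : V → ℤ} (h : 0 ≤ a) : 0 ≤ toQ a := by
  intro v
  have h0 : (0:ℤ) ≤ a v := h v
  show (0:ℚ) ≤ (a v : ℚ)
  exact_mod_cast h0
lemma toQ_sub (a b : V → ℤ) : toQ (a - b) = toQ a - toQ b := by
  funext v; simp [toQ]
lemma toQ_neg (a : V → ℤ) : toQ (-a) = -toQ a := by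
  funext v; simp [toQ]
lemma toQ_zero : toQ (0 : V → ℤ) = 0 := by funext v; simp [toQ]
lemma toQ_single (v : V) : toQ (Pi.single v (1:ℤ)) = Pi.single v (1:ℚ) := by
  funext w; simp [toQ, Pi.single_apply]
lemma toQ_eq_zero {a : V → ℤ} (h : toQ a = 0) : a = 0 := by
  funext v; have := congrFun h v; simpa [toQ] using this

lemma pi_expand (x : V → ℚ) : x = ∑ v, x v • (Pi.single v (1:ℚ) : V → ℚ) := by
  funext w
  rw [Finset.sum_apply]
  simp [Pi.single_apply]

lemma B_expand_left (B : LinearMap.BilinForm ℚ (V → ℚ)) (x y : V → ℚ) :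
    B x y = ∑ v, x v * B (Pi.single v 1) y := by
  conv_lhs => rw [pi_expand x]
  rw [map_sum, LinearMap.sum_apply]
  simp [smul_eq_mul]

lemma B_expand_right (B : LinearMap.BilinForm ℚ (V → ℚ)) (x y : V → ℚ) :
    B x y = ∑ w, y w * B x (Pi.single w 1) := by
  conv_lhs => rw [pi_expand y]
  rw [map_sum]
  simp [smul_eq_mul]

lemma B_single_int (B : LinearMap.BilinForm ℚ (V → ℚ))
    (hint : ∀ v w : V, ∃ n : ℤ, B (Pi.single v 1) (Pi.single w 1) = (n : ℚ))
    (z : V → ℤ) (v : V) : ∃ n : ℤ, B (toQ z) (Pi.single v 1) = (n : ℚ) := by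
  choose nf hnf using hint
  refine ⟨∑ w, z w * nf w v, ?_⟩
  rw [B_expand_left]
  push_cast
  exact Finset.sum_congr rfl fun w _ => by rw [hnf w v]; rfl

variable (B : LinearMap.BilinForm ℚ (V → ℚ)) (ZK : V → ℚ) (χ : (V → ℚ) → ℚ)

lemma chi_zero (hχ : ∀ x : V → ℚ, χ x = -(B x (x - ZK)) / 2) : χ 0 = 0 := by
  rw [hχ]; simp

lemma chi_add (hsymm : ∀ x y : V → ℚ, B x y = B y x)
    (hχ : ∀ x : V → ℚ, χ x = -(B x (x - ZK)) / 2) (x y : V → ℚ) :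
    χ (x + y) = χ x + χ y - B x y := by
  rw [hχ, hχ, hχ]
  have e1 : B (x + y) (x + y - ZK)
      = B x (x - ZK) + B y (y - ZK) + B x y + B y x := by
    simp only [map_add, map_sub, LinearMap.add_apply, LinearMap.sub_apply]
    ring
  rw [e1, hsymm y x]
  ring

lemma chi_neg_single (hsymm : ∀ x y : V → ℚ, B x y = B y x)
    (hZK : ∀ v : V, B ZK (Pi.single v 1) = B (Pi.single v 1) (Pi.single v 1) + 2)
    (hχ : ∀ x : V → ℚ, χ x = -(B x (x - ZK)) / 2) (v : V) :
    χ (-(Pi.single v (1:ℚ))) = -(B (Pi.single v 1) (Pi.single v 1) + 1) := by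
  rw [hχ]
  have e1 : B (-(Pi.single v (1:ℚ))) (-(Pi.single v (1:ℚ)) - ZK)
      = B (Pi.single v 1) (Pi.single v 1) + B (Pi.single v 1) ZK := by
    simp only [map_neg, map_sub, LinearMap.neg_apply]
    ring
  rw [e1, hsymm _ ZK, hZK v]
  ring

lemma chi_neg_nonneg (hsymm : ∀ x y : V → ℚ, B x y = B y x)
    (hint : ∀ v w : V, ∃ n : ℤ, B (Pi.single v 1) (Pi.single w 1) = (n : ℚ))
    (hneg : ∀ x : V → ℚ, x ≠ 0 → B x x < 0)
    (hZK : ∀ v : V, B ZK (Pi.single v 1) = B (Pi.single v 1) (Pi.single v 1) + 2)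
    (hχ : ∀ x : V → ℚ, χ x = -(B x (x - ZK)) / 2) :
    ∀ z : V → ℤ, 0 ≤ z → 0 ≤ χ (toQ (-z)) := by
  suffices H : ∀ N : ℕ, ∀ z : V → ℤ, 0 ≤ z → ∑ v, z v = (N : ℤ) → 0 ≤ χ (toQ (-z)) by
    intro z hz
    have hs : 0 ≤ ∑ v, z v := Finset.sum_nonneg fun v _ => hz v
    exact H (∑ v, z v).toNat z hz (Int.toNat_of_nonneg hs).symm
  intro N
  induction N with
  | zero =>
    intro z hz hsum
    have : z = 0 := by
      funext v
      have := (Finset.sum_eq_zero_iff_of_nonneg (fun v _ => hz v)).mp (by exact_mod_cast hsum)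
      exact this v (Finset.mem_univ v)
    rw [this]
    simp [toQ_zero, chi_zero B ZK χ hχ]
  | succ N ih =>
    intro z hz hsum
    have hzne : z ≠ 0 := by
      rintro rfl
      simp at hsum
      omega
    have hQne : toQ z ≠ 0 := fun h => hzne (toQ_eq_zero h)
    have hBzz := hneg (toQ z) hQne
    rw [B_expand_right] at hBzz
    have : ∑ w, toQ z w * B (toQ z) (Pi.single w 1) < ∑ w : V, (0:ℚ) := by
      simpa using hBzz
    obtain ⟨v, -, hv⟩ := Finset.exists_lt_of_sum_lt this
    have hz0 : (0:ℤ) ≤ z v := hz v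
    have hzv : 0 ≤ (toQ z) v := by
      show (0:ℚ) ≤ (z v : ℚ)
      exact_mod_cast hz0
    have hBv : B (toQ z) (Pi.single v 1) < 0 := by nlinarith
    have hzv1 : 1 ≤ z v := by
      rcases hz0.lt_or_eq with h | h
      · omega
      · exfalso
        rw [show toQ z v = ((z v : ℤ) : ℚ) from rfl, ← h] at hv
        simp at hv
    obtain ⟨n, hn⟩ := B_single_int B hint z v
    have hn1 : B (toQ z) (Pi.single v 1) ≤ -1 := by
      rw [hn] at hBv ⊢
      have h1 : n < 0 := by exact_mod_cast hBv
      have h2 : n ≤ -1 := by omega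
      exact_mod_cast h2
    set z' : V → ℤ := z - Pi.single v 1 with hz'
    have hz'nn : 0 ≤ z' := by
      intro w
      simp only [hz', Pi.sub_apply, Pi.single_apply, Pi.zero_apply]
      by_cases hwv : w = v
      · subst hwv; simp; omega
      · simp [hwv]; exact hz w
    have hz'sum : ∑ w, z' w = (N : ℤ) := by
      simp only [hz', Pi.sub_apply]
      rw [Finset.sum_sub_distrib]
      rw [Finset.sum_pi_single' v (1:ℤ), hsum]
      simp
    have ihz' := ih z' hz'nn hz'sum
    have hdecomp : toQ (-z) = toQ (-z') + -(Pi.single v (1:ℚ)) := by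
      rw [toQ_neg, toQ_neg, hz', toQ_sub, toQ_single]
      ring
    have hch := chi_add B ZK χ hsymm hχ (toQ (-z')) (-(Pi.single v (1:ℚ)))
    rw [← hdecomp] at hch
    have hBneg : B (toQ (-z')) (-(Pi.single v (1:ℚ)))
        = B (toQ z) (Pi.single v 1) - B (Pi.single v 1) (Pi.single v 1) := by
      rw [toQ_neg, hz', toQ_sub, toQ_single]
      simp only [map_neg, map_sub, LinearMap.neg_apply, LinearMap.sub_apply]
      ring
    have hsng := chi_neg_single B ZK χ hsymm hZK hχ v
    rw [hch, hBneg, hsng]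
    linarith

end Aux

lemma B_nonneg_disjoint {V : Type*} [Fintype V] [DecidableEq V]
    (B : LinearMap.BilinForm ℚ (V → ℚ))
    (hoff : ∀ v w : V, v ≠ w → 0 ≤ B (Pi.single v 1) (Pi.single w 1))
    {x y : V → ℚ} (hx : 0 ≤ x) (hy : 0 ≤ y) (hd : ∀ v, x v = 0 ∨ y v = 0) :
    0 ≤ B x y := by
  rw [B_expand_left]
  apply Finset.sum_nonneg
  intro v _
  rw [B_expand_right, Finset.mul_sum]
  apply Finset.sum_nonneg
  intro w _
  rcases eq_or_ne v w with rfl | hvw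
  · rcases hd v with h | h <;> simp [h]
  · exact mul_nonneg (hx v) (mul_nonneg (hy w) (hoff v w hvw))


/-- If `μ := min_{l ∈ ℤ^V} χ(l) < 0`, then the set
`M = {Z ∈ ℤ^V : Z > 0, χ(Z) = μ}` is nonempty and has a least element. -/
theorem chi_minimizers_least_element
    {V : Type*} [Fintype V] [Nonempty V] [DecidableEq V]
    (B : LinearMap.BilinForm ℚ (V → ℚ))
    (hsymm : ∀ x y : V → ℚ, B x y = B y x)
    (hint : ∀ v w : V, ∃ n : ℤ, B (Pi.single v 1) (Pi.single w 1) = (n : ℚ))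
    (hoff : ∀ v w : V, v ≠ w → 0 ≤ B (Pi.single v 1) (Pi.single w 1))
    (hneg : ∀ x : V → ℚ, x ≠ 0 → B x x < 0)
    (ZK : V → ℚ)
    (hZK : ∀ v : V, B ZK (Pi.single v 1) = B (Pi.single v 1) (Pi.single v 1) + 2)
    (χ : (V → ℚ) → ℚ)
    (hχ : ∀ x : V → ℚ, χ x = -(B x (x - ZK)) / 2)
    (μ : ℚ)
    (hμ : IsLeast {c : ℚ | ∃ l : V → ℤ, χ (toQ l) = c} μ)
    (hμneg : μ < 0) :
    ∃ Zmin : V → ℤ, (0 ≤ Zmin ∧ Zmin ≠ 0 ∧ χ (toQ Zmin) = μ) ∧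
      ∀ Z : V → ℤ, (0 ≤ Z ∧ Z ≠ 0 ∧ χ (toQ Z) = μ) → Zmin ≤ Z := by
  classical
  obtain ⟨hμmem, hμlb⟩ := hμ
  have hlb : ∀ l : V → ℤ, μ ≤ χ (toQ l) := fun l => hμlb ⟨l, rfl⟩
  have hchi0 : χ 0 = 0 := chi_zero B ZK χ hχ
  -- the set of (not-necessarily-nonzero) nonnegative minimizers
  set P : Set (V → ℤ) := {Z | 0 ≤ Z ∧ χ (toQ Z) = μ} with hPdef
  have hPne0 : ∀ Z ∈ P, Z ≠ 0 := by
    rintro Z ⟨-, hZ⟩ rfl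
    rw [toQ_zero, hchi0] at hZ
    exact absurd hZ.symm (ne_of_lt hμneg)
  -- P is nonempty
  obtain ⟨l, hl⟩ := hμmem
  set lp : V → ℤ := fun v => max (l v) 0 with hlpdef
  set ln : V → ℤ := fun v => min (l v) 0 with hlndef
  have hl_eq : l = lp + ln := by
    funext v; simp only [hlpdef, hlndef, Pi.add_apply]; omega
  have hlp_nn : 0 ≤ lp := fun v => le_max_right _ _
  have hln_nn : 0 ≤ -ln := fun v => by
    simp only [hlndef, Pi.neg_apply, Pi.zero_apply]; omega
  have hdisj : ∀ v, toQ lp v = 0 ∨ toQ (-ln) v = 0 := by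
    intro v
    rcases le_or_gt (l v) 0 with h | h
    · left; simp [toQ, hlpdef, h]
    · right; simp [toQ, hlndef, h.le]
  have hB1 : 0 ≤ B (toQ lp) (toQ (-ln)) :=
    B_nonneg_disjoint B hoff (toQ_nonneg hlp_nn) (toQ_nonneg hln_nn) hdisj
  have hB2 : B (toQ lp) (toQ ln) ≤ 0 := by
    rw [toQ_neg, map_neg] at hB1
    linarith
  have hchln : 0 ≤ χ (toQ ln) := by
    have := chi_neg_nonneg B ZK χ hsymm hint hneg hZK hχ (-ln) hln_nn
    rwa [neg_neg] at this
  have hadd : χ (toQ l) = χ (toQ lp) + χ (toQ ln) - B (toQ lp) (toQ ln) := by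
    rw [hl_eq, toQ_add]
    exact chi_add B ZK χ hsymm hχ _ _
  have hlpP : lp ∈ P := by
    refine ⟨hlp_nn, le_antisymm ?_ (hlb lp)⟩
    rw [hl] at hadd
    linarith
  -- P is closed under pointwise inf
  have hinf : ∀ Z₁ ∈ P, ∀ Z₂ ∈ P, Z₁ ⊓ Z₂ ∈ P := by
    rintro Z₁ ⟨h1n, h1m⟩ Z₂ ⟨h2n, h2m⟩
    set a : V → ℤ := Z₁ ⊓ Z₂ with hadef
    set x : V → ℤ := Z₁ - a with hxdef
    set y : V → ℤ := Z₂ - a with hydef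
    have ha_nn : 0 ≤ a := le_inf h1n h2n
    have hx_nn : 0 ≤ x := fun v => by
      simp only [hxdef, hadef, Pi.sub_apply, Pi.inf_apply, Pi.zero_apply]
      omega
    have hy_nn : 0 ≤ y := fun v => by
      simp only [hydef, hadef, Pi.sub_apply, Pi.inf_apply, Pi.zero_apply]
      omega
    have hxy_disj : ∀ v, toQ x v = 0 ∨ toQ y v = 0 := by
      intro v
      have : a v = Z₁ v ⊓ Z₂ v := rfl
      rcases le_total (Z₁ v) (Z₂ v) with h | h
      · left; simp [toQ, hxdef, this, min_eq_left h]
      · right; simp [toQ, hydef, this, min_eq_right h]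
    have hBxy : 0 ≤ B (toQ x) (toQ y) :=
      B_nonneg_disjoint B hoff (toQ_nonneg hx_nn) (toQ_nonneg hy_nn) hxy_disj
    have hZ1 : Z₁ = a + x := by rw [hxdef]; ring
    have hZ2 : Z₂ = a + y := by rw [hydef]; ring
    have E2 : χ (toQ Z₂) = χ (toQ a) + χ (toQ y) - B (toQ a) (toQ y) := by
      rw [hZ2, toQ_add]
      exact chi_add B ZK χ hsymm hχ _ _
    have E3 : χ (toQ (Z₁ + y)) = χ (toQ Z₁) + χ (toQ y) - B (toQ Z₁) (toQ y) := by
      rw [toQ_add]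
      exact chi_add B ZK χ hsymm hχ _ _
    have E4 : B (toQ Z₁) (toQ y) = B (toQ a) (toQ y) + B (toQ x) (toQ y) := by
      rw [hZ1, toQ_add, map_add, LinearMap.add_apply]
    have hsup := hlb (Z₁ + y)
    have haP : χ (toQ a) = μ := by
      refine le_antisymm ?_ (hlb a)
      rw [h1m] at E3
      rw [E4] at E3
      linarith
    exact ⟨ha_nn, haP⟩
  -- least element via a finite sublattice
  have hlpS : lp ∈ (Finset.Icc (0 : V → ℤ) lp).filter (fun Z => χ (toQ Z) = μ) := by
    simp only [Finset.mem_filter, Finset.mem_Icc]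
    exact ⟨⟨hlp_nn, le_refl lp⟩, hlpP.2⟩
  set S : Finset (V → ℤ) := (Finset.Icc (0 : V → ℤ) lp).filter (fun Z => χ (toQ Z) = μ)
    with hSdef
  have hSne : S.Nonempty := ⟨lp, hlpS⟩
  have hSP : ∀ Z ∈ S, Z ∈ P := by
    intro Z hZ
    simp only [hSdef, Finset.mem_filter, Finset.mem_Icc] at hZ
    exact ⟨hZ.1.1, hZ.2⟩
  set Zmin : V → ℤ := S.inf' hSne id with hZmindef
  have hZminP : Zmin ∈ P := Finset.inf'_mem P hinf S hSne id hSP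
  refine ⟨Zmin, ⟨hZminP.1, hPne0 Zmin hZminP, hZminP.2⟩, ?_⟩
  rintro Z ⟨hZnn, -, hZm⟩
  have hZP : Z ∈ P := ⟨hZnn, hZm⟩
  have hZlpP : Z ⊓ lp ∈ P := hinf Z hZP lp hlpP
  have hZlpS : Z ⊓ lp ∈ S := by
    simp only [hSdef, Finset.mem_filter, Finset.mem_Icc]
    exact ⟨⟨hZlpP.1, inf_le_right⟩, hZlpP.2⟩
  calc Zmin ≤ Z ⊓ lp := Finset.inf'_le id hZlpS
    _ ≤ Z := inf_le_left
end

section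
/- For every Z ∈ ℤ^V with Z ≥ 0, the minimum of χ(l) over {l ∈ ℤ^V : l ≤ Z} equals the minimum of χ(l) over {l ∈ ℤ^V : 0 ≤ l ≤ Z} (both minima exist). -/
/-- For every `Z ∈ ℤ^V` with `Z ≥ 0`, the minimum of `χ(l)` over
`{l ∈ ℤ^V : l ≤ Z}` equals the minimum over `{l ∈ ℤ^V : 0 ≤ l ≤ Z}`
(both minima exist). -/
theorem chi_min_below_Z_eq_min_effective
    {V : Type*} [Fintype V] [Nonempty V] [DecidableEq V]
    (B : LinearMap.BilinForm ℚ (V → ℚ))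
    (hsymm : ∀ x y : V → ℚ, B x y = B y x)
    (hint : ∀ v w : V, ∃ n : ℤ, B (Pi.single v 1) (Pi.single w 1) = (n : ℚ))
    (hoff : ∀ v w : V, v ≠ w → 0 ≤ B (Pi.single v 1) (Pi.single w 1))
    (hneg : ∀ x : V → ℚ, x ≠ 0 → B x x < 0)
    (ZK : V → ℚ)
    (hZK : ∀ v : V, B ZK (Pi.single v 1) = B (Pi.single v 1) (Pi.single v 1) + 2)
    (χ : (V → ℚ) → ℚ)
    (hχ : ∀ x : V → ℚ, χ x = -(B x (x - ZK)) / 2)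
    (Z : V → ℤ) (hZ : 0 ≤ Z) :
    ∃ μ : ℚ,
      IsLeast ((fun l : V → ℤ => χ (toQ l)) '' {l | l ≤ Z}) μ ∧
      IsLeast ((fun l : V → ℤ => χ (toQ l)) '' {l | 0 ≤ l ∧ l ≤ Z}) μ := by
  classical
  -- decomposition of toQ m into basis vectors
  have htoQ_sum : ∀ m : V → ℤ, toQ m = ∑ v, (m v : ℚ) • (Pi.single v 1 : V → ℚ) := by
    intro m; funext w
    simp [toQ, Finset.sum_apply, Pi.single_apply]
  -- expansion in the first argument
  have hexp : ∀ (m : V → ℤ) (y : V → ℚ),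
      B (toQ m) y = ∑ v, (m v : ℚ) * B (Pi.single v 1) y := by
    intro m y
    rw [htoQ_sum m]
    simp [map_sum, LinearMap.sum_apply, LinearMap.smul_apply, smul_eq_mul]
  -- expansion in the second argument
  have hexp2 : ∀ (x : V → ℚ) (m : V → ℤ),
      B x (toQ m) = ∑ v, (m v : ℚ) * B x (Pi.single v 1) := by
    intro x m
    rw [htoQ_sum m]
    simp [map_sum, map_smul, smul_eq_mul]
  -- additivity of χ
  have hadd : ∀ x y : V → ℚ, χ (x + y) = χ x + χ y - B x y := by
    intro x y
    have hs := hsymm y x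
    simp only [hχ, map_add, map_sub, LinearMap.add_apply, LinearMap.sub_apply]
    linarith
  have hchi0 : χ 0 = 0 := by simp [hχ]
  -- integrality of B (toQ m) e_v
  obtain ⟨N, hN⟩ : ∃ N : V → V → ℤ, ∀ v w,
      B (Pi.single v 1) (Pi.single w 1) = ((N v w : ℤ) : ℚ) := by
    choose N hN using hint; exact ⟨N, hN⟩
  have hBint : ∀ (m : V → ℤ) (v : V), ∃ n : ℤ, B (toQ m) (Pi.single v 1) = (n : ℚ) := by
    intro m v
    refine ⟨∑ w, m w * N w v, ?_⟩
    rw [hexp]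
    push_cast
    exact Finset.sum_congr rfl fun w _ => by rw [hN w v]
  -- toQ of single
  have htoQ_single : ∀ v : V, toQ (Pi.single v 1) = Pi.single v (1 : ℚ) := by
    intro v; funext w
    by_cases h : w = v <;> simp [toQ, Pi.single_apply, h]
  -- toQ of subtraction
  have htoQ_sub : ∀ a b : V → ℤ, toQ (a - b) = toQ a - toQ b := by
    intro a b; funext w; simp [toQ]
  -- key nonnegativity lemma: χ(-m) ≥ 0 for m ≥ 0
  have hkey : ∀ n : ℕ, ∀ m : V → ℤ, 0 ≤ m → (∑ v, m v).toNat = n →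
      0 ≤ χ (-(toQ m)) := by
    intro n
    induction n using Nat.strong_induction_on with
    | _ n ih =>
      intro m hm hn
      by_cases hm0 : m = 0
      · subst hm0
        have : toQ (0 : V → ℤ) = 0 := by funext w; simp [toQ]
        rw [this, neg_zero, hchi0]
      · -- find v in support with B (toQ m) e_v < 0
        have hmQ : toQ m ≠ 0 := by
          intro h
          apply hm0
          funext w
          have := congrFun h w
          simpa [toQ] using this
        have hBneg : B (toQ m) (toQ m) < 0 := hneg _ hmQ
        have hexists : ∃ v, 0 < m v ∧ B (toQ m) (Pi.single v 1) < 0 := by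
          by_contra h
          push_neg at h
          have : 0 ≤ B (toQ m) (toQ m) := by
            rw [hexp2]
            apply Finset.sum_nonneg
            intro v _
            rcases lt_or_eq_of_le (hm v) with hv | hv
            · exact mul_nonneg (by exact_mod_cast hv.le) (h v hv)
            · simp [← hv]
          linarith
        obtain ⟨v, hv, hvB⟩ := hexists
        -- B (toQ m) e_v ≤ -1 by integrality
        obtain ⟨k, hk⟩ := hBint m v
        have hk1 : (k : ℚ) ≤ -1 := by
          have h0 : (k : ℚ) < 0 := by rw [← hk]; exact hvB
          have h1 : k < 0 := by exact_mod_cast h0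
          have h2 : k ≤ -1 := by omega
          exact_mod_cast h2
        -- inductive step with m' = m - e_v
        set m' : V → ℤ := m - Pi.single v 1 with hm'def
        have hm' : 0 ≤ m' := by
          intro w
          by_cases hw : w = v
          · subst hw
            simp only [hm'def, Pi.sub_apply, Pi.single_eq_same, Pi.zero_apply]
            omega
          · simp only [hm'def, Pi.sub_apply, Pi.single_eq_of_ne hw, Pi.zero_apply]
            simpa using hm w
        have hsum : ∑ w, m' w = (∑ w, m w) - 1 := by
          simp [hm'def, Finset.sum_sub_distrib, Pi.single_apply]
        have hsum_ge : (1 : ℤ) ≤ ∑ w, m w := by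
          have h1 : m v ≤ ∑ w, m w :=
            Finset.single_le_sum (fun w _ => hm w) (Finset.mem_univ v)
          have h2 : (0:ℤ) + 1 ≤ m v := Int.add_one_le_iff.mpr hv
          linarith
        have hlt : (∑ w, m' w).toNat < n := by
          rw [hsum]; omega
        have ihval : 0 ≤ χ (-(toQ m')) := ih _ hlt m' hm' rfl
        have e3 : B (toQ m') (Pi.single v 1)
            = B (toQ m) (Pi.single v 1) - B (Pi.single v 1) (Pi.single v 1) := by
          rw [hm'def, htoQ_sub, htoQ_single, map_sub, LinearMap.sub_apply]
        have e2 : χ (-(Pi.single v 1 : V → ℚ))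
            = -(B (Pi.single v 1) (Pi.single v 1)) - 1 := by
          have h1 := hZK v
          have h2 := hsymm (Pi.single v 1 : V → ℚ) ZK
          simp only [hχ, map_neg, LinearMap.neg_apply, map_sub, LinearMap.sub_apply]
          linarith
        have e1 : χ (-(toQ m)) = χ (-(toQ m')) + χ (-(Pi.single v 1 : V → ℚ))
            - B (toQ m') (Pi.single v 1) := by
          have hsplit : -(toQ m) = -(toQ m') + -(Pi.single v 1 : V → ℚ) := by
            rw [hm'def, htoQ_sub, htoQ_single]; abel
          rw [hsplit, hadd]
          have hBnn : B (-(toQ m')) (-(Pi.single v 1 : V → ℚ))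
              = B (toQ m') (Pi.single v 1) := by
            simp [map_neg, LinearMap.neg_apply]
          rw [hBnn]
        linarith [e1, e2, e3, hk, hk1, ihval]
  -- monotonicity: χ (l ⊔ 0) ≤ χ l
  have hmono : ∀ l : V → ℤ, χ (toQ (l ⊔ 0)) ≤ χ (toQ l) := by
    intro l
    set p : V → ℤ := l ⊔ 0 with hp
    set q : V → ℤ := p - l with hq
    have hq0 : 0 ≤ q := by
      intro w
      simp only [hq, hp, Pi.sub_apply, Pi.sup_apply, Pi.zero_apply]
      have := le_sup_left (a := l w) (b := (0 : ℤ))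
      omega
    have hpq0 : ∀ w, p w * q w = 0 := by
      intro w
      simp only [hq, hp, Pi.sub_apply, Pi.sup_apply, Pi.zero_apply]
      rcases le_total (l w) 0 with h | h
      · rw [sup_eq_right.mpr h]; ring
      · rw [sup_eq_left.mpr h]; ring
    have hp0 : ∀ w, 0 ≤ p w := fun w => by
      simp only [hp, Pi.sup_apply, Pi.zero_apply]; exact le_sup_right
    have hcross : 0 ≤ B (toQ p) (toQ q) := by
      rw [hexp]
      apply Finset.sum_nonneg; intro v _
      rw [hexp2, Finset.mul_sum]
      apply Finset.sum_nonneg; intro w _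
      by_cases hvw : v = w
      · subst hvw
        have h0 : (p v : ℚ) * (q v : ℚ) = 0 := by
          have := hpq0 v; exact_mod_cast this
        calc (0:ℚ) = (p v : ℚ) * (q v : ℚ) * B (Pi.single v 1) (Pi.single v 1) := by
              rw [h0]; ring
          _ = (p v : ℚ) * ((q v : ℚ) * B (Pi.single v 1) (Pi.single v 1)) := by ring
          _ ≤ _ := le_refl _
      · have h1 : (0:ℚ) ≤ (p v : ℚ) := by exact_mod_cast hp0 v
        have h2 : (0:ℚ) ≤ (q w : ℚ) := by exact_mod_cast hq0 w
        exact mul_nonneg h1 (mul_nonneg h2 (hoff v w hvw))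
    have hkeyq : 0 ≤ χ (-(toQ q)) := hkey _ q hq0 rfl
    have hsplit : toQ l = toQ p + -(toQ q) := by
      rw [hq, htoQ_sub]; abel
    have hchil : χ (toQ l) = χ (toQ p) + χ (-(toQ q)) + B (toQ p) (toQ q) := by
      rw [hsplit, hadd]
      have : B (toQ p) (-(toQ q)) = -(B (toQ p) (toQ q)) := by
        simp [map_neg]
      rw [this]; ring
    linarith
  -- the minimum over the finite effective region
  set f : (V → ℤ) → ℚ := fun l => χ (toQ l) with hf
  have hne : (Finset.Icc (0 : V → ℤ) Z).Nonempty :=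
    ⟨0, by simp [Finset.mem_Icc, hZ]⟩
  have hne' : ((Finset.Icc (0 : V → ℤ) Z).image f).Nonempty := hne.image f
  set μ := ((Finset.Icc (0 : V → ℤ) Z).image f).min' hne' with hμ
  obtain ⟨l₀, hl₀, hfl₀⟩ := Finset.mem_image.mp (Finset.min'_mem _ hne')
  rw [Finset.mem_Icc] at hl₀
  have hlb : ∀ l : V → ℤ, 0 ≤ l → l ≤ Z → μ ≤ f l := fun l h1 h2 =>
    Finset.min'_le _ _ (Finset.mem_image_of_mem f (Finset.mem_Icc.mpr ⟨h1, h2⟩))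
  refine ⟨μ, ⟨⟨l₀, hl₀.2, hfl₀⟩, ?_⟩, ⟨l₀, ⟨hl₀.1, hl₀.2⟩, hfl₀⟩, ?_⟩
  · rintro y ⟨l, hl, rfl⟩
    have h1 : (l ⊔ 0 : V → ℤ) ≤ Z := sup_le hl hZ
    have h2 : (0 : V → ℤ) ≤ (l ⊔ 0 : V → ℤ) := le_sup_right
    exact le_trans (hlb _ h2 h1) (hmono l)
  · rintro y ⟨l, ⟨h1, h2⟩, rfl⟩
    exact hlb l h1 h2
end

section
/- Let w ∈ V, let l′ ∈ ℚ^V with B(l′, e_w) ≤ −1, and let Z ∈ ℤ^V with Z ≥ 0 and Z_w ≥ 1. Then the minimum of χ(−l′ + l) over {l ∈ ℤ^V : 0 ≤ l ≤ Z} equals the minimum of χ(−l′ + l) over {l ∈ ℤ^V : e_w ≤ l ≤ Z} (both sets are finite and nonempty). -/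
/-- Let `w ∈ V`, `l′ ∈ ℚ^V` with `B(l′, e_w) ≤ −1`, and `Z ∈ ℤ^V`
with `Z ≥ 0`, `Z_w ≥ 1`.  Then the minimum of `χ(−l′ + l)` over
`{0 ≤ l ≤ Z}` equals the minimum over `{e_w ≤ l ≤ Z}` (both sets are finite and
nonempty). -/
theorem chi_min_laufer_step
    {V : Type*} [Fintype V] [Nonempty V] [DecidableEq V]
    (B : LinearMap.BilinForm ℚ (V → ℚ))
    (hsymm : ∀ x y : V → ℚ, B x y = B y x)
    (hoff : ∀ v w : V, v ≠ w → 0 ≤ B (Pi.single v 1) (Pi.single w 1))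
    (ZK : V → ℚ)
    (hZK : ∀ v : V, B ZK (Pi.single v 1) = B (Pi.single v 1) (Pi.single v 1) + 2)
    (χ : (V → ℚ) → ℚ)
    (hχ : ∀ x : V → ℚ, χ x = -(B x (x - ZK)) / 2)
    (w : V) (l' : V → ℚ) (hl' : B l' (Pi.single w 1) ≤ -1)
    (Z : V → ℤ) (hZ : 0 ≤ Z) (hZw : 1 ≤ Z w) :
    {l : V → ℤ | 0 ≤ l ∧ l ≤ Z}.Finite ∧
    {l : V → ℤ | Pi.single w 1 ≤ l ∧ l ≤ Z}.Finite ∧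
    {l : V → ℤ | 0 ≤ l ∧ l ≤ Z}.Nonempty ∧
    {l : V → ℤ | Pi.single w 1 ≤ l ∧ l ≤ Z}.Nonempty ∧
    ∃ μ : ℚ,
      IsLeast ((fun l : V → ℤ => χ (-l' + toQ l)) '' {l | 0 ≤ l ∧ l ≤ Z}) μ ∧
      IsLeast ((fun l : V → ℤ => χ (-l' + toQ l)) '' {l | Pi.single w 1 ≤ l ∧ l ≤ Z}) μ := by
  set eQ : V → ℚ := Pi.single w 1 with heQ
  set S : Set (V → ℤ) := {l | 0 ≤ l ∧ l ≤ Z} with hS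
  set T : Set (V → ℤ) := {l | Pi.single w 1 ≤ l ∧ l ≤ Z} with hT
  have hSIcc : S = Set.Icc 0 Z := rfl
  have hTIcc : T = Set.Icc (Pi.single w 1) Z := rfl
  have hSfin : S.Finite := by rw [hSIcc]; exact Set.finite_Icc 0 Z
  have hTfin : T.Finite := by rw [hTIcc]; exact Set.finite_Icc _ Z
  have hewZ : (Pi.single w 1 : V → ℤ) ≤ Z := by
    intro v
    by_cases hv : v = w
    · subst hv; simpa using hZw
    · simp [Pi.single_apply, hv]; exact hZ v
  have hTne : T.Nonempty := ⟨Pi.single w 1, le_refl _, hewZ⟩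
  have hSne : S.Nonempty := ⟨0, le_refl _, hZ⟩
  have hTsubS : T ⊆ S := by
    intro l hl
    refine ⟨le_trans ?_ hl.1, hl.2⟩
    intro v
    by_cases hv : v = w <;> simp [Pi.single_apply, hv]
  -- key inequality
  have hkey : ∀ l : V → ℤ, 0 ≤ l → l w = 0 →
      χ (-l' + toQ (l + Pi.single w 1)) ≤ χ (-l' + toQ l) := by
    intro l hl hlw
    have hcast : toQ (l + Pi.single w 1) = toQ l + eQ := by
      funext v
      simp [toQ, Pi.single_apply, apply_ite (fun z : ℤ => (z : ℚ)), heQ]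
    rw [hcast, ← add_assoc]
    set x : V → ℚ := -l' + toQ l with hx
    have h1 : B (x + eQ) (x + eQ - ZK)
        = B x (x - ZK) + B x eQ + B eQ x + B eQ eQ - B eQ ZK := by
      simp only [map_add, map_sub, LinearMap.add_apply, LinearMap.sub_apply]
      ring
    have h2 : B eQ ZK = B eQ eQ + 2 := by rw [hsymm]; exact hZK w
    have h4 : 0 ≤ B (toQ l) eQ := by
      have hrep2 : toQ l = ∑ v : V, (l v : ℚ) • (Pi.single v 1 : V → ℚ) := by
        funext u
        simp [toQ, Finset.sum_apply, Pi.single_apply]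
      rw [hrep2]
      rw [map_sum]
      simp only [map_smul, LinearMap.sum_apply, LinearMap.smul_apply, smul_eq_mul]
      apply Finset.sum_nonneg
      intro v _
      by_cases hv : v = w
      · subst hv; simp [hlw]
      · have := hoff v w hv
        have : (0:ℚ) ≤ (l v : ℚ) := by exact_mod_cast hl v
        positivity
    have h3 : 1 ≤ B x eQ := by
      have : B x eQ = -(B l' eQ) + B (toQ l) eQ := by
        rw [hx]; simp [map_add, LinearMap.add_apply]
      rw [this]
      linarith [hl' , h4]
    rw [hχ, hχ]
    have hxe : B eQ x = B x eQ := hsymm _ _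
    rw [h1, h2, hxe]
    linarith
  obtain ⟨l₀, hl₀T, hl₀min⟩ := Set.exists_min_image T (fun l => χ (-l' + toQ l)) hTfin hTne
  refine ⟨hSfin, hTfin, hSne, hTne, χ (-l' + toQ l₀), ⟨⟨l₀, hTsubS hl₀T, rfl⟩, ?_⟩,
    ⟨⟨l₀, hl₀T, rfl⟩, ?_⟩⟩
  · rintro y ⟨l, hlS, rfl⟩
    by_cases hw1 : 1 ≤ l w
    · have hlT : l ∈ T := by
        refine ⟨?_, hlS.2⟩
        intro v
        by_cases hv : v = w
        · subst hv; simpa using hw1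
        · simp [Pi.single_apply, hv]; exact hlS.1 v
      exact hl₀min l hlT
    · have hlw : l w = 0 := le_antisymm (by omega) (hlS.1 w)
      have hmem : l + Pi.single w 1 ∈ T := by
        constructor
        · intro v
          by_cases hv : v = w
          · subst hv; simp [hlw]
          · simp [Pi.single_apply, hv]; exact hlS.1 v
        · intro v
          by_cases hv : v = w
          · subst hv; simp [hlw]; omega
          · simp [Pi.single_apply, hv]; exact hlS.2 v
      exact le_trans (hl₀min _ hmem) (hkey l hlS.1 hlw)
  · rintro y ⟨l, hlT, rfl⟩
    exact hl₀min l hlT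
end

section
/- Let Z ∈ ℤ^V with Z ≥ 0 and let l′ ∈ ℚ^V. The set 𝒟 = {D ∈ ℤ^V : 0 ≤ D ≤ Z and B(l′ − D, e_v) ≥ 0 for every v ∈ V with Z_v − D_v > 0} contains Z, and it has a least element: there exists D₀ ∈ 𝒟 with D₀ ≤ D for every D ∈ 𝒟. -/
/-- Membership in the set `𝒟`: `0 ≤ D ≤ Z` and `B(l′ − D, e_v) ≥ 0` for every
vertex `v` in the support of `Z − D`. -/
def LauferEndpoint {V : Type*} [Fintype V] [DecidableEq V]
    (B : LinearMap.BilinForm ℚ (V → ℚ)) (l' : V → ℚ) (Z D : V → ℤ) : Prop :=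
  0 ≤ D ∧ D ≤ Z ∧ ∀ v : V, 0 < Z v - D v → 0 ≤ B (l' - toQ D) (Pi.single v 1)

private lemma aux_nonneg {V : Type*} [Fintype V] [DecidableEq V]
    (B : LinearMap.BilinForm ℚ (V → ℚ))
    (hoff : ∀ v w : V, v ≠ w → 0 ≤ B (Pi.single v 1) (Pi.single w 1))
    (x : V → ℚ) (hx : 0 ≤ x) (v : V) (hxv : x v = 0) :
    0 ≤ B x (Pi.single v 1) := by
  have hx' : x = ∑ i, x i • (Pi.single i 1 : V → ℚ) := by
    ext j
    simp [Pi.single_apply, Finset.sum_ite_eq', mul_comm]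
  rw [hx']
  simp only [map_sum, map_smul, LinearMap.sum_apply, LinearMap.smul_apply, smul_eq_mul]
  apply Finset.sum_nonneg
  intro w _
  by_cases h : w = v
  · subst h; rw [hxv]; simp
  · exact mul_nonneg (hx w) (hoff w v h)

private lemma aux_half {V : Type*} [Fintype V] [DecidableEq V]
    (B : LinearMap.BilinForm ℚ (V → ℚ))
    (hoff : ∀ v w : V, v ≠ w → 0 ≤ B (Pi.single v 1) (Pi.single w 1))
    (Z D E : V → ℤ) (l' : V → ℚ) (hD : LauferEndpoint B l' Z D)
    (hED : E ≤ D) (v : V) (hEv : E v = D v) (hv : 0 < Z v - E v) :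
    0 ≤ B (l' - toQ E) (Pi.single v 1) := by
  rw [← sub_add_sub_cancel l' (toQ D) (toQ E), map_add, LinearMap.add_apply]
  have h1 : 0 ≤ B (l' - toQ D) (Pi.single v 1) := hD.2.2 v (by omega)
  have h2 : 0 ≤ B (toQ D - toQ E) (Pi.single v 1) := by
    apply aux_nonneg B hoff
    · intro w
      simp only [Pi.sub_apply, Pi.zero_apply, toQ, sub_nonneg]
      exact_mod_cast hED w
    · simp [toQ, hEv]
  linarith

private lemma min_closed {V : Type*} [Fintype V] [DecidableEq V]
    (B : LinearMap.BilinForm ℚ (V → ℚ))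
    (hoff : ∀ v w : V, v ≠ w → 0 ≤ B (Pi.single v 1) (Pi.single w 1))
    (Z : V → ℤ) (l' : V → ℚ) (D D' : V → ℤ)
    (hD : LauferEndpoint B l' Z D) (hD' : LauferEndpoint B l' Z D') :
    LauferEndpoint B l' Z (D ⊓ D') := by
  refine ⟨le_inf hD.1 hD'.1, inf_le_left.trans hD.2.1, ?_⟩
  intro v hv
  have hmin : (D ⊓ D') v = min (D v) (D' v) := rfl
  rcases min_cases (D v) (D' v) with ⟨h, _⟩ | ⟨h, _⟩
  · exact aux_half B hoff Z D (D ⊓ D') l' hD inf_le_left v (hmin.trans h) hv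
  · exact aux_half B hoff Z D' (D ⊓ D') l' hD' inf_le_right v (hmin.trans h) hv

/-- The set `𝒟` contains `Z` and has a least element. -/
theorem laufer_endpoint_least_element
    {V : Type*} [Fintype V] [Nonempty V] [DecidableEq V]
    (B : LinearMap.BilinForm ℚ (V → ℚ))
    (hsymm : ∀ x y : V → ℚ, B x y = B y x)
    (hoff : ∀ v w : V, v ≠ w → 0 ≤ B (Pi.single v 1) (Pi.single w 1))
    (Z : V → ℤ) (hZ : 0 ≤ Z) (l' : V → ℚ) :
    LauferEndpoint B l' Z Z ∧
    ∃ D₀ : V → ℤ, LauferEndpoint B l' Z D₀ ∧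
      ∀ D : V → ℤ, LauferEndpoint B l' Z D → D₀ ≤ D := by
  classical
  have hZmem : LauferEndpoint B l' Z Z := ⟨hZ, le_refl Z, fun v hv => by omega⟩
  refine ⟨hZmem, ?_⟩
  set T : Finset (V → ℤ) :=
    (Finset.Icc 0 Z).filter (fun D => LauferEndpoint B l' Z D) with hT
  have hZT : Z ∈ T := by
    simp only [hT, Finset.mem_filter, Finset.mem_Icc]
    exact ⟨⟨hZ, le_refl Z⟩, hZmem⟩
  have hTne : T.Nonempty := ⟨Z, hZT⟩
  have hclosed : ∀ D ∈ T, ∀ D' ∈ T, D ⊓ D' ∈ T := by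
    intro D hDm D' hDm'
    simp only [hT, Finset.mem_filter, Finset.mem_Icc] at hDm hDm' ⊢
    have := min_closed B hoff Z l' D D' hDm.2 hDm'.2
    exact ⟨⟨this.1, this.2.1⟩, this⟩
  refine ⟨T.inf' hTne id, ?_, ?_⟩
  · have : T.inf' hTne id ∈ T := by
      apply Finset.inf'_induction hTne id
      · intro a ha b hb
        exact hclosed a ha b hb
      · intro a ha; exact ha
    simp only [hT, Finset.mem_filter] at this
    exact this.2
  · intro D hD
    have hDT : D ∈ T := by
      simp only [hT, Finset.mem_filter, Finset.mem_Icc]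
      exact ⟨⟨hD.1, hD.2.1⟩, hD⟩
    exact Finset.inf'_le id hDT
end

section
/- Assume the simple graph on V whose edges are the pairs {u, v} with u ≠ v and B(e_u, e_v) > 0 is connected. Let l′ ∈ ℚ^V with l′ ≤ 0 coordinatewise, and suppose that l′_v = 0 for some v ∈ V and l′_u < 0 for some u ∈ V. Then there exists w ∈ V with l′_w = 0 and B(l′, e_w) < 0. -/
/-- Assume the simple graph on `V` with edges `{u, v}`, `u ≠ v`,
`B(e_u, e_v) > 0`, is connected.  If `l′ ≤ 0`, `l′_v = 0` for some `v` and
`l′_u < 0` for some `u`, then there is `w` with `l′_w = 0` and `B(l′, e_w) < 0`. -/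
theorem exists_zero_vertex_with_negative_pairing
    {V : Type*} [Fintype V] [Nonempty V] [DecidableEq V]
    (B : LinearMap.BilinForm ℚ (V → ℚ))
    (hsymm : ∀ x y : V → ℚ, B x y = B y x)
    (hoff : ∀ v w : V, v ≠ w → 0 ≤ B (Pi.single v 1) (Pi.single w 1))
    (hconn : (SimpleGraph.fromRel
      (fun u v : V => 0 < B (Pi.single u 1) (Pi.single v 1))).Connected)
    (l' : V → ℚ) (hl' : l' ≤ 0)
    (v : V) (hv : l' v = 0)
    (u : V) (hu : l' u < 0) :
    ∃ w : V, l' w = 0 ∧ B l' (Pi.single w 1) < 0 := by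
  have key : ∀ z w : V, z ≠ w → 0 < B (Pi.single z 1) (Pi.single w 1) →
      l' z < 0 → l' w = 0 → B l' (Pi.single w 1) < 0 := by
    intro z w hzw hpos hz hw
    have hrepr : l' = ∑ x : V, l' x • (Pi.single x 1 : V → ℚ) := by
      funext j
      simp [Finset.sum_apply, Pi.single_apply]
    rw [hrepr]
    simp only [map_sum, LinearMap.map_smul, LinearMap.sum_apply,
      LinearMap.smul_apply, smul_eq_mul]
    have h0 : (0 : ℚ) = ∑ _x : V, (0 : ℚ) := by simp
    rw [h0]
    refine Finset.sum_lt_sum ?_ ⟨z, Finset.mem_univ z, ?_⟩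
    · intro x _
      by_cases hxw : x = w
      · subst hxw; simp [hw]
      · exact mul_nonpos_iff.mpr (Or.inr ⟨hl' x, hoff x w hxw⟩)
    · exact mul_neg_of_neg_of_pos hz hpos
  set G := SimpleGraph.fromRel
      (fun u v : V => 0 < B (Pi.single u 1) (Pi.single v 1)) with hG
  suffices H : ∀ (a : V), G.Walk a v → l' a < 0 →
      ∃ w : V, l' w = 0 ∧ B l' (Pi.single w 1) < 0 by
    exact H u (hconn u v).some hu
  intro a p
  induction p with
  | nil => intro ha; exact absurd hv (ne_of_lt ha)
  | @cons a b _ h q ih =>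
    intro ha
    rw [hG, SimpleGraph.fromRel_adj] at h
    by_cases hb : l' b = 0
    · refine ⟨b, hb, ?_⟩
      rcases h.2 with hp | hp
      · exact key a b h.1 hp ha hb
      · exact key a b h.1 (by rw [hsymm]; exact hp) ha hb
    · exact ih hv (lt_of_le_of_ne (hl' b) hb)
end

section
/- For every l′ ∈ ℚ^V there exists Z₀ ∈ ℤ^V with Z₀ ≥ 0 such that for every Z ∈ ℤ^V with Z ≥ Z₀, the minimum of χ(−l′ + l) over {l ∈ ℤ^V : 0 ≤ l ≤ Z} equals the minimum of χ(−l′ + l) over {l ∈ ℤ^V : l ≥ 0} (all these minima exist). -/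
/-- Rationals that become integers after multiplication by `N`. -/
def intMulSub (N : ℤ) : AddSubgroup ℚ where
  carrier := {q | ∃ k : ℤ, q * (N : ℚ) = (k : ℚ)}
  zero_mem' := ⟨0, by simp⟩
  add_mem' := by
    rintro a b ⟨j, hj⟩ ⟨k, hk⟩
    exact ⟨j + k, by push_cast; rw [add_mul, hj, hk]⟩
  neg_mem' := by
    rintro a ⟨j, hj⟩
    exact ⟨-j, by push_cast; rw [neg_mul, hj]⟩

lemma den_dvd_mem {N : ℤ} (q : ℚ) (h : (q.den : ℤ) ∣ N) : q ∈ intMulSub N := by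
  obtain ⟨c, hc⟩ := h
  refine ⟨q.num * c, ?_⟩
  rw [hc]
  push_cast
  rw [← mul_assoc, Rat.mul_den_eq_num]

/-- For every `l′ ∈ ℚ^V` there exists `Z₀ ∈ ℤ^V`, `Z₀ ≥ 0`, such
that for every `Z ≥ Z₀` the minimum of `χ(−l′ + l)` over `{0 ≤ l ≤ Z}` equals
the minimum over `{l ≥ 0}` (all these minima exist). -/
theorem chi_truncated_min_stabilizes
    {V : Type*} [Fintype V] [Nonempty V] [DecidableEq V]
    (B : LinearMap.BilinForm ℚ (V → ℚ))
    (hsymm : ∀ x y : V → ℚ, B x y = B y x)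
    (hneg : ∀ x : V → ℚ, x ≠ 0 → B x x < 0)
    (ZK : V → ℚ)
    (hZK : ∀ v : V, B ZK (Pi.single v 1) = B (Pi.single v 1) (Pi.single v 1) + 2)
    (χ : (V → ℚ) → ℚ)
    (hχ : ∀ x : V → ℚ, χ x = -(B x (x - ZK)) / 2) :
    ∀ l' : V → ℚ, ∃ Z₀ : V → ℤ, 0 ≤ Z₀ ∧
      ∀ Z : V → ℤ, Z₀ ≤ Z →
        ∃ μ : ℚ,
          IsLeast ((fun l : V → ℤ => χ (-l' + toQ l)) '' {l | 0 ≤ l ∧ l ≤ Z}) μ ∧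
          IsLeast ((fun l : V → ℤ => χ (-l' + toQ l)) '' {l | 0 ≤ l}) μ := by
  intro l'
  classical
  set f : (V → ℤ) → ℚ := fun l => χ (-l' + toQ l) with hfdef
  set w : V → ℚ := (2:ℚ) • l' + ZK with hw
  -- B is negative semidefinite
  have hBle : ∀ y : V → ℚ, B y y ≤ 0 := by
    intro y
    by_cases h : y = 0
    · simp [h]
    · exact (hneg y h).le
  -- global lower bound for f
  have hlb : ∀ l : V → ℤ, B ZK ZK / 8 ≤ f l := by
    intro l
    have hfl : f l = χ (-l' + toQ l) := rfl
    have hx := hχ (-l' + toQ l)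
    set x : V → ℚ := -l' + toQ l with hxdef
    set y : V → ℚ := x - (2:ℚ)⁻¹ • ZK with hy
    have hx2 : x = y + (2:ℚ)⁻¹ • ZK := by rw [hy]; abel
    have hx3 : x - ZK = y - (2:ℚ)⁻¹ • ZK := by rw [hy]; module
    have h1 : B x (x - ZK) = B y y - (2:ℚ)⁻¹ * ((2:ℚ)⁻¹ * B ZK ZK) := by
      rw [hx3]
      nth_rewrite 1 [hx2]
      simp only [map_add, map_sub, map_smul, LinearMap.add_apply, LinearMap.sub_apply,
        LinearMap.smul_apply, smul_eq_mul]
      linear_combination (2:ℚ)⁻¹ * hsymm ZK y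
    rw [hfl, hx, h1]
    linarith [hBle y]
  -- key algebraic identity
  have hkey : ∀ l : V → ℤ, 2 * (f 0 - f l) = B (toQ l) (toQ l) - B (toQ l) w := by
    intro l
    have h0 : toQ (0 : V → ℤ) = 0 := by funext v; simp [toQ]
    have e0 : f 0 = χ (-l' + toQ 0) := rfl
    have el : f l = χ (-l' + toQ l) := rfl
    rw [e0, el, h0, add_zero, hχ, hχ, hw]
    simp only [map_add, map_sub, map_neg, map_smul, LinearMap.add_apply, LinearMap.sub_apply,
      LinearMap.neg_apply, LinearMap.smul_apply, smul_eq_mul]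
    linear_combination hsymm (toQ l) l'
  -- the common denominator
  set N : ℤ := (∏ p : V × V, ((B (Pi.single p.1 1) (Pi.single p.2 1)).den : ℤ)) *
      ∏ v : V, ((B (Pi.single v 1) w).den : ℤ) with hN
  have hNpos : 0 < N := by
    apply mul_pos <;> exact Finset.prod_pos fun i _ => by exact_mod_cast (Rat.den_pos _)
  have ha : ∀ u v : V, B (Pi.single u 1) (Pi.single v 1) ∈ intMulSub N := by
    intro u v
    exact den_dvd_mem _ (Dvd.dvd.mul_right
      (Finset.dvd_prod_of_mem (fun p : V × V => ((B (Pi.single p.1 1) (Pi.single p.2 1)).den : ℤ))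
        (Finset.mem_univ (u, v))) _)
  have hc : ∀ v : V, B (Pi.single v 1) w ∈ intMulSub N := by
    intro v
    exact den_dvd_mem _ (Dvd.dvd.mul_left
      (Finset.dvd_prod_of_mem (fun v : V => ((B (Pi.single v 1) w).den : ℤ))
        (Finset.mem_univ v)) _)
  -- expansion of toQ l in the standard basis
  have hmrep : ∀ l : V → ℤ, toQ l = ∑ v : V, (l v : ℚ) • (Pi.single v 1 : V → ℚ) := by
    intro l
    funext u
    simp [toQ, Pi.single_apply]
  have hBm : ∀ (l : V → ℤ) (x : V → ℚ),
      B (toQ l) x = ∑ v : V, (l v : ℚ) * B (Pi.single v 1) x := by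
    intro l x
    rw [hmrep l, map_sum]
    simp only [map_smul, LinearMap.sum_apply, LinearMap.smul_apply, smul_eq_mul]
  have hmem : ∀ l : V → ℤ, (B (toQ l) (toQ l) - B (toQ l) w) ∈ intMulSub N := by
    intro l
    apply sub_mem
    · rw [hBm l (toQ l)]
      refine sum_mem fun u _ => ?_
      rw [show (l u : ℚ) * B (Pi.single u 1) (toQ l) = (l u) • B (Pi.single u 1) (toQ l) from
        (zsmul_eq_mul _ _).symm]
      refine zsmul_mem ?_ _
      rw [hsymm, hBm l]
      refine sum_mem fun v _ => ?_
      rw [show (l v : ℚ) * B (Pi.single v 1) (Pi.single u 1) =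
        (l v) • B (Pi.single v 1) (Pi.single u 1) from (zsmul_eq_mul _ _).symm]
      exact zsmul_mem (ha v u) _
    · rw [hBm l w]
      refine sum_mem fun v _ => ?_
      rw [show (l v : ℚ) * B (Pi.single v 1) w = (l v) • B (Pi.single v 1) w from
        (zsmul_eq_mul _ _).symm]
      exact zsmul_mem (hc v) _
  -- discreteness of the values
  have hdisc : ∀ l : V → ℤ, ∃ k : ℤ, (f 0 - f l) * (2 * (N : ℚ)) = (k : ℚ) := by
    intro l
    obtain ⟨k, hk⟩ := hmem l
    refine ⟨k, ?_⟩
    have h2 := hkey l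
    calc (f 0 - f l) * (2 * (N : ℚ)) = (2 * (f 0 - f l)) * (N : ℚ) := by ring
    _ = (B (toQ l) (toQ l) - B (toQ l) w) * (N : ℚ) := by rw [h2]
    _ = (k : ℚ) := hk
  -- the bounded-above set of integer values
  have hPbdd : ∃ b : ℤ, ∀ z : ℤ,
      (∃ l : V → ℤ, 0 ≤ l ∧ (f 0 - f l) * (2 * (N : ℚ)) = (z : ℚ)) → z ≤ b := by
    refine ⟨⌈(f 0 - B ZK ZK / 8) * (2 * (N : ℚ))⌉, ?_⟩
    rintro z ⟨l, hl0, hz⟩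
    have h2N : (0:ℚ) < 2 * (N : ℚ) := by
      have : (0:ℚ) < (N : ℚ) := by exact_mod_cast hNpos
      linarith
    have h1 : (z : ℚ) ≤ (f 0 - B ZK ZK / 8) * (2 * (N : ℚ)) := by
      rw [← hz]
      apply mul_le_mul_of_nonneg_right _ h2N.le
      linarith [hlb l]
    exact_mod_cast h1.trans (Int.le_ceil _)
  have hPne : ∃ z : ℤ, ∃ l : V → ℤ, 0 ≤ l ∧ (f 0 - f l) * (2 * (N : ℚ)) = (z : ℚ) :=
    ⟨0, 0, le_refl _, by simp⟩
  obtain ⟨kmax, ⟨lstar, hls0, hlsk⟩, hmax⟩ := Int.exists_greatest_of_bdd hPbdd hPne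
  -- lstar is a global minimizer of f over {l ≥ 0}
  have hglobal : ∀ l : V → ℤ, 0 ≤ l → f lstar ≤ f l := by
    intro l hl
    obtain ⟨k, hk⟩ := hdisc l
    have hkk : k ≤ kmax := hmax k ⟨l, hl, hk⟩
    have h2N : (0:ℚ) < 2 * (N : ℚ) := by
      have : (0:ℚ) < (N : ℚ) := by exact_mod_cast hNpos
      linarith
    have hq : (f 0 - f l) * (2 * (N : ℚ)) ≤ (f 0 - f lstar) * (2 * (N : ℚ)) := by
      rw [hk, hlsk]; exact_mod_cast hkk
    have := (mul_le_mul_iff_of_pos_right h2N).mp hq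
    linarith
  refine ⟨lstar, hls0, fun Z hZ => ⟨f lstar, ⟨⟨lstar, ⟨hls0, hZ⟩, rfl⟩, ?_⟩,
    ⟨lstar, hls0, rfl⟩, ?_⟩⟩
  · rintro q ⟨l, ⟨h1, _⟩, rfl⟩
    exact hglobal l h1
  · rintro q ⟨l, h1, rfl⟩
    exact hglobal l h1
end
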